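/- Let (X,w) be a weighted graph and R a nontrivial abelian group. Then the 0-dimensional coboundary expansion of X with coefficients in the constant augmented sheaf R satisfies cb₀(X,w,R) ≥ h′(X,w), where h′(X,w) = min over nonempty proper vertex subsets A of w(E(A, Aᶜ)) / (2 w(A) w(Aᶜ)). That is, for every function f : X(0) → R there exists a ∈ R such that w({e ∈ X(1) : f(e⁺) ≠ f(e⁻)}) ≥ h′(X,w) · w({v : f(v) ≠ a}). -/

import Mathlib

open SimpleGraph Finset
open scoped Classical

lemma dart_sum_aux {V : Type*} [Fintype V] [DecidableEq V] (G : SimpleGraph V)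
    [DecidableRel G.Adj] (g : Sym2 V → ℝ) :
    ∑ v, ∑ u ∈ G.neighborFinset v, g s(v, u) = 2 * ∑ e ∈ G.edgeFinset, g e := by
  have h1 : ∑ d : G.Dart, g d.edge = ∑ v, ∑ u ∈ G.neighborFinset v, g s(v, u) := by
    rw [← Finset.sum_fiberwise_of_maps_to (t := Finset.univ)
      (g := fun d : G.Dart => d.fst) (fun d _ => Finset.mem_univ d.fst) (fun d => g d.edge)]
    refine Finset.sum_congr rfl fun v _ => ?_
    have : (Finset.univ.filter fun d : G.Dart => d.fst = v)
        = Finset.univ.image (G.dartOfNeighborSet v) := by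
      simpa using G.dart_fst_fiber v
    rw [this, Finset.sum_image (fun a _ b _ h => G.dartOfNeighborSet_injective v h)]
    rw [neighborFinset_def, ← Finset.sum_set_coe]
    rfl
  have h2 : ∑ d : G.Dart, g d.edge = ∑ e ∈ G.edgeFinset, 2 * g e := by
    rw [← Finset.sum_fiberwise_of_maps_to (t := G.edgeFinset)
      (g := fun d : G.Dart => d.edge)
      (fun d _ => by rw [mem_edgeFinset]; exact d.edge_mem) (fun d => g d.edge)]
    refine Finset.sum_congr rfl fun e he => ?_
    rw [Finset.sum_congr rfl (fun d hd => by
      rw [(Finset.mem_filter.1 hd).2]), Finset.sum_const,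
      G.dart_edge_fiber_card e (mem_edgeFinset.1 he)]
    simp [mul_comm]
  rw [← h1, h2, Finset.mul_sum]

/-- `cb₀(X,w,R) ≥ h′(X,w)` for the constant augmented sheaf with coefficients in a
nontrivial abelian group `R`: if `h'` satisfies
`w(E(A,Aᶜ)) ≥ h'·2·w(A)·w(Aᶜ)` for every nonempty proper vertex set `A`, then for
every `f : X(0) → R` there is `a ∈ R` with
`w({e : f(e⁺) ≠ f(e⁻)}) ≥ h' · w({v : f(v) ≠ a})`. -/
theorem stmt14 {V : Type*} [Fintype V] [DecidableEq V] (G : SimpleGraph V)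
    [DecidableRel G.Adj]
    (wE : Sym2 V → ℝ) (wV : V → ℝ)
    (hEpos : ∀ e ∈ G.edgeSet, 0 < wE e) (hVpos : ∀ v : V, 0 < wV v)
    (hsum : ∑ e ∈ G.edgeFinset, wE e = 1)
    (hvert : ∀ v : V, 2 * wV v = ∑ u ∈ G.neighborFinset v, wE s(v, u))
    (R : Type*) [AddCommGroup R] [Nontrivial R]
    (h' : ℝ)
    (hh' : ∀ A : Finset V, A.Nonempty → A ≠ Finset.univ →
      h' * (2 * (∑ v ∈ A, wV v) * (∑ v ∈ Aᶜ, wV v))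
        ≤ ∑ u ∈ A, ∑ v ∈ (G.neighborFinset u) \ A, wE s(u, v))
    (f : V → R) :
    ∃ a : R,
      h' * (∑ v ∈ Finset.univ.filter (fun v => f v ≠ a), wV v)
        ≤ (1 / 2) * ∑ u, ∑ v ∈ G.neighborFinset u,
            (if f u ≠ f v then wE s(u, v) else 0) := by
  classical
  have hS0 : 0 ≤ ∑ u, ∑ v ∈ G.neighborFinset u,
      (if f u ≠ f v then wE s(u, v) else 0) := by
    refine Finset.sum_nonneg fun u _ => Finset.sum_nonneg fun v hv => ?_
    split_ifs
    · exact le_of_lt (hEpos _ ((G.mem_edgeSet).2 ((G.mem_neighborFinset u v).1 hv)))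
    · exact le_rfl
  by_cases hpos : 0 < h'
  swap
  · refine ⟨0, le_trans (mul_nonpos_of_nonpos_of_nonneg (not_lt.1 hpos)
      (Finset.sum_nonneg fun v _ => (hVpos v).le)) (by linarith)⟩
  by_cases hc : ∀ u v : V, f u = f v
  · rcases isEmpty_or_nonempty V with h | h
    · refine ⟨0, ?_⟩
      simp
    · refine ⟨f h.some, ?_⟩
      have hempty : Finset.univ.filter (fun v => f v ≠ f h.some) = ∅ := by
        refine Finset.filter_eq_empty_iff.2 fun v _ => ?_
        simp [hc v h.some]
      rw [hempty]
      simp only [Finset.sum_empty, mul_zero]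
      linarith
  push_neg at hc
  obtain ⟨u0, v0, huv⟩ := hc
  set D : R → ℝ := fun b => ∑ v ∈ Finset.univ.filter (fun v => f v ≠ b), wV v with hD
  set A : R → Finset V := fun b => Finset.univ.filter (fun v => f v = b) with hA
  obtain ⟨a, haim, hamin⟩ := Finset.exists_min_image (Finset.univ.image f) D
    ⟨f u0, Finset.mem_image_of_mem f (Finset.mem_univ u0)⟩
  refine ⟨a, ?_⟩
  show h' * D a ≤ _
  -- total vertex weight is 1
  have hT : ∑ v, wV v = 1 := by
    have h2 : ∑ v, 2 * wV v = 2 * ∑ e ∈ G.edgeFinset, wE e := by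
      rw [show (∑ v, 2 * wV v) = ∑ v, ∑ u ∈ G.neighborFinset v, wE s(v, u) from
        Finset.sum_congr rfl fun v _ => hvert v, dart_sum_aux]
    rw [hsum, ← Finset.mul_sum] at h2
    linarith
  -- partition of vertex weight by fibers of f
  have hTsplit : ∑ b ∈ Finset.univ.image f, ∑ v ∈ A b, wV v = ∑ v, wV v :=
    Finset.sum_fiberwise_of_maps_to (fun v _ => Finset.mem_image_of_mem f (Finset.mem_univ v)) wV
  -- partition of the cut sum by fibers of f
  have hScut : ∑ b ∈ Finset.univ.image f, ∑ u ∈ A b,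
        ∑ v ∈ G.neighborFinset u \ A b, wE s(u, v)
      = ∑ u, ∑ v ∈ G.neighborFinset u, (if f u ≠ f v then wE s(u, v) else 0) := by
    rw [← Finset.sum_fiberwise_of_maps_to (t := Finset.univ.image f) (g := f)
      (fun v _ => Finset.mem_image_of_mem f (Finset.mem_univ v))
      (fun u => ∑ v ∈ G.neighborFinset u, (if f u ≠ f v then wE s(u, v) else 0))]
    refine Finset.sum_congr rfl fun b _ => Finset.sum_congr rfl fun u hu => ?_
    have hub : f u = b := (Finset.mem_filter.1 hu).2
    rw [← Finset.sum_filter]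
    congr 1
    ext v
    simp [hA, Finset.mem_sdiff, hub, eq_comm]
  -- per-fiber lower bound
  have hb : ∀ b ∈ Finset.univ.image f,
      h' * (2 * (∑ v ∈ A b, wV v) * D a)
        ≤ ∑ u ∈ A b, ∑ v ∈ G.neighborFinset u \ A b, wE s(u, v) := by
    intro b hbim
    obtain ⟨x, _, hx⟩ := Finset.mem_image.1 hbim
    have hne : (A b).Nonempty := ⟨x, by simp [hA, hx]⟩
    have hprop : A b ≠ Finset.univ := by
      intro h
      by_cases h1 : f u0 = b
      · have hv0 : v0 ∈ A b := h ▸ Finset.mem_univ v0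
        exact huv (h1.trans ((Finset.mem_filter.1 hv0).2).symm)
      · have hu0 : u0 ∈ A b := h ▸ Finset.mem_univ u0
        exact h1 (Finset.mem_filter.1 hu0).2
    have h1 := hh' (A b) hne hprop
    have hcompl : ∑ v ∈ (A b)ᶜ, wV v = D b := by
      congr 1
      ext v
      simp [hA, hD]
    rw [hcompl] at h1
    refine le_trans ?_ h1
    have hDa : D a ≤ D b := hamin b hbim
    have hw : 0 ≤ ∑ v ∈ A b, wV v := Finset.sum_nonneg fun v _ => (hVpos v).le
    nlinarith [mul_nonneg (mul_nonneg hpos.le hw) (sub_nonneg.2 hDa)]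
  have hsum2 := Finset.sum_le_sum hb
  have hleft : ∑ b ∈ Finset.univ.image f, h' * (2 * (∑ v ∈ A b, wV v) * D a)
      = h' * 2 * D a * ∑ b ∈ Finset.univ.image f, ∑ v ∈ A b, wV v := by
    rw [Finset.mul_sum]
    exact Finset.sum_congr rfl fun b _ => by ring
  rw [hleft, hTsplit, hT, hScut] at hsum2
  linarith
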